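/- Let G be a false-twin-free graph containing a triangle K₃ as a subgraph. Then no vertex of G belongs to all bicliques of G. -/

import Mathlib

/-- A set of vertices inducing a complete bipartite subgraph (both sides nonempty). -/
def IsCompleteBipartiteSet {V : Type*} (G : SimpleGraph V) (B : Set V) : Prop :=
  ∃ X Y : Set V, X.Nonempty ∧ Y.Nonempty ∧ Disjoint X Y ∧ B = X ∪ Y ∧
    (∀ x ∈ X, ∀ y ∈ Y, G.Adj x y) ∧
    (∀ x ∈ X, ∀ x' ∈ X, ¬ G.Adj x x') ∧
    (∀ y ∈ Y, ∀ y' ∈ Y, ¬ G.Adj y y')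

/-- A biclique: a maximal set of vertices inducing a complete bipartite subgraph. -/
def IsBiclique {V : Type*} (G : SimpleGraph V) (B : Set V) : Prop :=
  IsCompleteBipartiteSet G B ∧
    ∀ B' : Set V, IsCompleteBipartiteSet G B' → B ⊆ B' → B' = B

/-- A vertex set that is a star: a center `c` adjacent to all other vertices of the set,
which are nonempty and pairwise non-adjacent (shape `K_{1,r}`, `r ≥ 1`). -/
def IsStarSet {V : Type*} (G : SimpleGraph V) (B : Set V) : Prop :=
  ∃ c ∈ B, (B \ {c}).Nonempty ∧ (∀ w ∈ B, w ≠ c → G.Adj c w) ∧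
    (∀ w ∈ B, ∀ z ∈ B, w ≠ c → z ≠ c → ¬ G.Adj w z)

/-- A graph is false-twin-free if no two distinct vertices have equal open neighborhoods. -/
def FalseTwinFree {V : Type*} (G : SimpleGraph V) : Prop :=
  ∀ u v : V, G.neighborSet u = G.neighborSet v → u = v

lemma exists_biclique_superset {V : Type*} [Fintype V] (G : SimpleGraph V) (B : Set V)
    (hB : IsCompleteBipartiteSet G B) : ∃ B', IsBiclique G B' ∧ B ⊆ B' := by
  classical
  have hfin : {B' : Set V | IsCompleteBipartiteSet G B' ∧ B ⊆ B'}.Finite := Set.toFinite _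
  obtain ⟨A, hA, hmax⟩ := Set.Finite.exists_maximalFor id _ hfin ⟨B, hB, subset_rfl⟩
  refine ⟨A, ⟨hA.1, ?_⟩, hA.2⟩
  intro B'' hB'' hsub
  exact Set.Subset.antisymm (hmax ⟨hB'', hA.2.trans hsub⟩ hsub) hsub

lemma edge_bipartite {V : Type*} (G : SimpleGraph V) {x y : V} (hxy : G.Adj x y) :
    IsCompleteBipartiteSet G ({x} ∪ {y} : Set V) := by
  refine ⟨{x}, {y}, ⟨x, rfl⟩, ⟨y, rfl⟩, ?_, rfl, ?_, ?_, ?_⟩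
  · simp [Set.disjoint_singleton, hxy.ne]
  · rintro a rfl b rfl; exact hxy
  · rintro a rfl b rfl; exact G.irrefl
  · rintro a rfl b rfl; exact G.irrefl

/-- In a false-twin-free graph containing a triangle, no vertex belongs to all
bicliques. -/
theorem no_universal_vertex_of_triangle {V : Type*} [Fintype V] (G : SimpleGraph V)
    (htf : FalseTwinFree G)
    (htri : ∃ a b c : V, G.Adj a b ∧ G.Adj a c ∧ G.Adj b c) :
    ¬ ∃ v : V, ∀ B : Set V, IsBiclique G B → v ∈ B := by
  rintro ⟨v, hv⟩
  obtain ⟨a, b, c, hab, hac, hbc⟩ := htri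
  -- v cannot be adjacent to both endpoints of an edge
  have key : ∀ x y : V, G.Adj x y → G.Adj v x → G.Adj v y → False := by
    intro x y hxy hvx hvy
    obtain ⟨B', ⟨⟨X, Y, _, _, _, hBXY, hXY, hXX, hYY⟩, _⟩, hsub⟩ :=
      exists_biclique_superset G _ (edge_bipartite G hxy)
    have hx : x ∈ X ∪ Y := hBXY ▸ hsub (Set.mem_union_left _ rfl)
    have hy : y ∈ X ∪ Y := hBXY ▸ hsub (Set.mem_union_right _ rfl)
    have hvB : v ∈ X ∪ Y := hBXY ▸ hv B' ⟨⟨X, Y, ‹_›, ‹_›, ‹_›, hBXY, hXY, hXX, hYY⟩, ‹_›⟩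
    rcases hx with hx | hx <;> rcases hy with hy | hy <;> rcases hvB with hvB | hvB
    · exact hXX x hx y hy hxy
    · exact hXX x hx y hy hxy
    · exact hXX v hvB x hx hvx
    · exact hYY v hvB y hy hvy
    · exact hXX v hvB y hy hvy
    · exact hYY v hvB x hx hvx
    · exact hYY x hx y hy hxy
    · exact hYY x hx y hy hxy
  -- for every edge, v is adjacent to one endpoint
  have edgeObs : ∀ x y : V, G.Adj x y → G.Adj v x ∨ G.Adj v y := by
    intro x y hxy
    obtain ⟨B', ⟨⟨X, Y, _, _, _, hBXY, hXY, hXX, hYY⟩, _⟩, hsub⟩ :=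
      exists_biclique_superset G _ (edge_bipartite G hxy)
    have hx : x ∈ X ∪ Y := hBXY ▸ hsub (Set.mem_union_left _ rfl)
    have hy : y ∈ X ∪ Y := hBXY ▸ hsub (Set.mem_union_right _ rfl)
    have hvB : v ∈ X ∪ Y := hBXY ▸ hv B' ⟨⟨X, Y, ‹_›, ‹_›, ‹_›, hBXY, hXY, hXX, hYY⟩, ‹_›⟩
    rcases hx with hx | hx <;> rcases hy with hy | hy <;> rcases hvB with hvB | hvB
    · exact absurd hxy (hXX x hx y hy)
    · exact absurd hxy (hXX x hx y hy)
    · exact Or.inr (hXY v hvB y hy)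
    · exact Or.inl ((hXY x hx v hvB).symm)
    · exact Or.inl (hXY v hvB x hx)
    · exact Or.inr ((hXY y hy v hvB).symm)
    · exact absurd hxy (hYY x hx y hy)
    · exact absurd hxy (hYY x hx y hy)
  rcases edgeObs a b hab with h1 | h1 <;> rcases edgeObs b c hbc with h2 | h2
  · exact key a b hab h1 h2
  · exact key a c hac h1 h2
  · rcases edgeObs a c hac with h3 | h3
    · exact key a b hab h3 h1
    · exact key b c hbc h1 h3
  · exact key b c hbc h1 h2
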